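/- For the GOY bilinear operator B, for all u, v ∈ H and all z ∈ V one has ⟨B(u,v), z⟩_{V',V} = −⟨B(u,z), v⟩_H, where ⟨f, z⟩_{V',V} = Re Σ_{n≥1} f_n conj(z_n) denotes the dual pairing between V' and V. -/

import Mathlib

open ComplexConjugate

noncomputable section

/-- Extension of a sequence `(u_n)_{n ≥ 1}` to integer indices, with the boundary
convention `u_m = 0` for `m ≤ 0` (in particular `u_0 = u_{-1} = 0`). -/
def ext (u : ℕ → ℂ) : ℤ → ℂ := fun m => if 1 ≤ m then u m.toNat else 0

/-- Wave numbers `k_n = k₀ 2^n`. -/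
def kseq (k₀ : ℝ) (n : ℤ) : ℝ := k₀ * 2 ^ n

/-- The GOY bilinear operator. -/
def goyB (k₀ : ℝ) (u v : ℕ → ℂ) : ℕ → ℂ := fun n =>
  Complex.I * (kseq k₀ n) *
    ( (1/4 : ℂ) * conj (ext v ((n : ℤ) - 1)) * conj (ext u ((n : ℤ) + 1))
      - (1/2 : ℂ) * (conj (ext u ((n : ℤ) + 1)) * conj (ext v ((n : ℤ) + 2))
          + conj (ext v ((n : ℤ) + 1)) * conj (ext u ((n : ℤ) + 2)))
      + (1/8 : ℂ) * conj (ext u ((n : ℤ) - 1)) * conj (ext v ((n : ℤ) - 2)) )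

/-- Membership in `H`: square-summability over `n ≥ 1`. -/
def memH (u : ℕ → ℂ) : Prop := Summable (fun n : ℕ => ‖u (n + 1)‖ ^ 2)

/-- The `H`-norm `|u|_H = (∑_{n ≥ 1} |u_n|²)^{1/2}`. -/
def normH (u : ℕ → ℂ) : ℝ := Real.sqrt (∑' n : ℕ, ‖u (n + 1)‖ ^ 2)

/-- Membership in `V`: `u ∈ H` and `∑_{n ≥ 1} k_n² |u_n|² < ∞`. -/
def memV (k₀ : ℝ) (u : ℕ → ℂ) : Prop :=
  memH u ∧ Summable (fun n : ℕ => (kseq k₀ (n + 1)) ^ 2 * ‖u (n + 1)‖ ^ 2)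

/-- The `V`-norm `‖u‖_V = (∑_{n ≥ 1} k_n² |u_n|²)^{1/2}`. -/
def normV (k₀ : ℝ) (u : ℕ → ℂ) : ℝ :=
  Real.sqrt (∑' n : ℕ, (kseq k₀ (n + 1)) ^ 2 * ‖u (n + 1)‖ ^ 2)

/-- The real inner product of `H` (and the dual pairing between `V'` and `V`):
`Re ∑_{n ≥ 1} u_n conj(v_n)`. -/
def pairing (u v : ℕ → ℂ) : ℝ := ∑' n : ℕ, (u (n + 1) * conj (v (n + 1))).re

/-- For the GOY operator `B`, for all `u, v ∈ H` and `z ∈ V` one has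
`⟨B(u,v), z⟩_{V',V} = −⟨B(u,z), v⟩_H`. -/
lemma ext_zero (u : ℕ → ℂ) {m : ℤ} (h : m ≤ 0) : ext u m = 0 := by
  simp only [ext, if_neg (by omega : ¬ (1:ℤ) ≤ m)]

lemma ext_coe (u : ℕ → ℂ) (n : ℕ) : ext u ((n:ℤ) + 1) = u (n + 1) := by
  simp only [ext, if_pos (by omega : (1:ℤ) ≤ (n:ℤ) + 1)]
  norm_num

lemma kseq_pos {k₀ : ℝ} (hk : 0 < k₀) (m : ℤ) : 0 < kseq k₀ m :=
  mul_pos hk (zpow_pos two_pos m)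

lemma kseq_add_one (k₀ : ℝ) (m : ℤ) : kseq k₀ (m + 1) = 2 * kseq k₀ m := by
  unfold kseq
  rw [zpow_add_one₀ (two_ne_zero : (2:ℝ) ≠ 0)]
  ring

lemma summable_ext_sq {u : ℕ → ℂ} (hu : memH u) :
    Summable (fun m : ℤ => ‖ext u m‖ ^ 2) := by
  apply Summable.of_nat_of_neg
  · apply (summable_nat_add_iff 1).mp
    have : ∀ n : ℕ, ‖ext u ((n + 1 : ℕ) : ℤ)‖ ^ 2 = ‖u (n + 1)‖ ^ 2 := by
      intro n
      rw [show ((n + 1 : ℕ) : ℤ) = (n : ℤ) + 1 by push_cast; ring, ext_coe]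
    simpa only [this] using (show Summable fun n : ℕ => ‖u (n + 1)‖ ^ 2 from hu)
  · have : ∀ n : ℕ, ‖ext u (-(n : ℤ))‖ ^ 2 = 0 := by
      intro n
      rw [ext_zero u (by omega : -(n:ℤ) ≤ 0)]
      simp
    simpa only [this] using summable_zero

lemma summable_ext_sq_shift {u : ℕ → ℂ} (hu : memH u) (s : ℤ) :
    Summable (fun n : ℕ => ‖ext u ((n:ℤ) + s)‖ ^ 2) :=
  (summable_ext_sq hu).comp_injective (fun a b hab => by simpa using hab)

lemma z_pointwise {k₀ : ℝ} {z : ℕ → ℂ} (hk : 0 < k₀) (hz : memV k₀ z) (m : ℤ) :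
    kseq k₀ m * ‖ext z m‖ ≤
      Real.sqrt (∑' n : ℕ, (kseq k₀ (n + 1)) ^ 2 * ‖z (n + 1)‖ ^ 2) := by
  rcases le_or_gt m 0 with h | h
  · rw [ext_zero z h]
    simpa using Real.sqrt_nonneg _
  · obtain ⟨n, rfl⟩ : ∃ n : ℕ, m = (n:ℤ) + 1 := ⟨(m-1).toNat, by omega⟩
    rw [ext_coe]
    have hterm : (kseq k₀ ((n:ℤ)+1)) ^ 2 * ‖z (n+1)‖ ^ 2 ≤
        ∑' n : ℕ, (kseq k₀ (n + 1)) ^ 2 * ‖z (n + 1)‖ ^ 2 := by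
      have := Summable.le_tsum hz.2 n (fun j _ => by positivity)
      simpa using this
    have h0 : 0 ≤ kseq k₀ ((n:ℤ)+1) * ‖z (n+1)‖ :=
      mul_nonneg (kseq_pos hk _).le (norm_nonneg _)
    rw [Real.le_sqrt h0 (le_trans (by positivity) hterm)]
    calc (kseq k₀ ((n:ℤ)+1) * ‖z (n+1)‖) ^ 2
        = (kseq k₀ ((n:ℤ)+1)) ^ 2 * ‖z (n+1)‖ ^ 2 := by ring
      _ ≤ _ := hterm

def cT (k₀ : ℝ) (c : ℂ) (su sv sz : ℤ) (u v z : ℕ → ℂ) (n : ℕ) : ℂ :=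
  Complex.I * (kseq k₀ n) * c * conj (ext u ((n:ℤ) + su)) * conj (ext v ((n:ℤ) + sv))
    * conj (ext z ((n:ℤ) + sz))

lemma kseq_le {k₀ : ℝ} (hk : 0 < k₀) (m : ℤ) {s : ℤ} (hs : -2 ≤ s) :
    kseq k₀ m ≤ 4 * kseq k₀ (m + s) := by
  unfold kseq
  have h1 : (2:ℝ) ^ (-2 : ℤ) ≤ 2 ^ s := zpow_le_zpow_right₀ one_le_two hs
  have h2 : (2:ℝ) ^ (m + s) = 2 ^ m * 2 ^ s := zpow_add₀ (two_ne_zero) m s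
  rw [h2]
  have hm : (0:ℝ) < 2 ^ m := zpow_pos two_pos m
  have h3 : (2:ℝ) ^ (-2 : ℤ) = 1/4 := by norm_num
  rw [h3] at h1
  nlinarith [hk.le, hm.le, mul_le_mul_of_nonneg_left h1 hm.le]

lemma summable_cT {k₀ : ℝ} (hk : 0 < k₀) {u v z : ℕ → ℂ}
    (hu : memH u) (hv : memH v) (hz : memV k₀ z)
    (c : ℂ) (su sv : ℤ) {sz : ℤ} (hsz : -2 ≤ sz) :
    Summable (fun n : ℕ => cT k₀ c su sv sz u v z (n + 1)) := by
  set M := Real.sqrt (∑' n : ℕ, (kseq k₀ (n + 1)) ^ 2 * ‖z (n + 1)‖ ^ 2) with hM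
  have hM0 : 0 ≤ M := Real.sqrt_nonneg _
  refine Summable.of_norm_bounded
    (g := fun n : ℕ => (4 * M * ‖c‖) *
      (‖ext u ((n:ℤ) + 1 + su)‖ ^ 2 + ‖ext v ((n:ℤ) + 1 + sv)‖ ^ 2)) ?_ ?_
  · apply Summable.mul_left
    have h1 : Summable (fun n : ℕ => ‖ext u ((n:ℤ) + 1 + su)‖ ^ 2) := by
      simpa [add_assoc] using summable_ext_sq_shift hu (1 + su)
    have h2 : Summable (fun n : ℕ => ‖ext v ((n:ℤ) + 1 + sv)‖ ^ 2) := by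
      simpa [add_assoc] using summable_ext_sq_shift hv (1 + sv)
    exact h1.add h2
  · intro n
    have ecast : ((n + 1 : ℕ) : ℤ) = (n:ℤ) + 1 := by push_cast; ring
    have hnorm : ‖cT k₀ c su sv sz u v z (n + 1)‖ =
        kseq k₀ ((n:ℤ) + 1) * ‖c‖ *
          (‖ext u ((n:ℤ) + 1 + su)‖ * ‖ext v ((n:ℤ) + 1 + sv)‖ * ‖ext z ((n:ℤ) + 1 + sz)‖) := by
      simp only [cT, ecast, norm_mul, Complex.norm_I, Complex.norm_real,
        RCLike.norm_conj, Real.norm_eq_abs, abs_of_pos (kseq_pos hk _)]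
      ring
    rw [hnorm]
    have hkz : kseq k₀ ((n:ℤ) + 1) * ‖ext z ((n:ℤ) + 1 + sz)‖ ≤ 4 * M := by
      calc kseq k₀ ((n:ℤ) + 1) * ‖ext z ((n:ℤ) + 1 + sz)‖
          ≤ (4 * kseq k₀ ((n:ℤ) + 1 + sz)) * ‖ext z ((n:ℤ) + 1 + sz)‖ := by
            apply mul_le_mul_of_nonneg_right (kseq_le hk _ hsz) (norm_nonneg _)
        _ = 4 * (kseq k₀ ((n:ℤ) + 1 + sz) * ‖ext z ((n:ℤ) + 1 + sz)‖) := by ring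
        _ ≤ 4 * M := by
            have := z_pointwise hk hz ((n:ℤ) + 1 + sz)
            linarith
    have huv : ‖ext u ((n:ℤ) + 1 + su)‖ * ‖ext v ((n:ℤ) + 1 + sv)‖ ≤
        ‖ext u ((n:ℤ) + 1 + su)‖ ^ 2 + ‖ext v ((n:ℤ) + 1 + sv)‖ ^ 2 := by
      nlinarith [norm_nonneg (ext u ((n:ℤ) + 1 + su)), norm_nonneg (ext v ((n:ℤ) + 1 + sv)),
        sq_nonneg (‖ext u ((n:ℤ) + 1 + su)‖ - ‖ext v ((n:ℤ) + 1 + sv)‖)]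
    have hk1 : 0 ≤ kseq k₀ ((n:ℤ) + 1) := (kseq_pos hk _).le
    have hz1 : 0 ≤ ‖ext z ((n:ℤ) + 1 + sz)‖ := norm_nonneg _
    have hu1 : 0 ≤ ‖ext u ((n:ℤ) + 1 + su)‖ := norm_nonneg _
    have hv1 : 0 ≤ ‖ext v ((n:ℤ) + 1 + sv)‖ := norm_nonneg _
    have hc1 : 0 ≤ ‖c‖ := norm_nonneg _
    calc kseq k₀ ((n:ℤ) + 1) * ‖c‖ *
          (‖ext u ((n:ℤ) + 1 + su)‖ * ‖ext v ((n:ℤ) + 1 + sv)‖ * ‖ext z ((n:ℤ) + 1 + sz)‖)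
        = (kseq k₀ ((n:ℤ) + 1) * ‖ext z ((n:ℤ) + 1 + sz)‖) * ‖c‖ *
          (‖ext u ((n:ℤ) + 1 + su)‖ * ‖ext v ((n:ℤ) + 1 + sv)‖) := by ring
      _ ≤ (4 * M) * ‖c‖ * (‖ext u ((n:ℤ) + 1 + su)‖ ^ 2 + ‖ext v ((n:ℤ) + 1 + sv)‖ ^ 2) := by
          apply mul_le_mul
          · exact mul_le_mul_of_nonneg_right hkz hc1
          · exact huv
          · positivity
          · positivity
      _ = (4 * M * ‖c‖) * (‖ext u ((n:ℤ) + 1 + su)‖ ^ 2 + ‖ext v ((n:ℤ) + 1 + sv)‖ ^ 2) := by ring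

lemma goyB_mul (k₀ : ℝ) (u v z : ℕ → ℂ) (n : ℕ) :
    goyB k₀ u v n * conj (ext z ((n:ℤ) + 0)) =
      cT k₀ (1/4) 1 (-1) 0 u v z n + cT k₀ (-(1/2)) 1 2 0 u v z n
      + cT k₀ (-(1/2)) 2 1 0 u v z n + cT k₀ (1/8) (-1) (-2) 0 u v z n := by
  simp only [goyB, cT, sub_eq_add_neg]
  ring

lemma cT_swap (k₀ : ℝ) (c : ℂ) (a b d : ℤ) (u x y : ℕ → ℂ) (n : ℕ) :
    cT k₀ c a b d u x y n = cT k₀ c a d b u y x n := by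
  simp only [cT]; ring

-- identity (i): C' n = - A (n+1)
lemma id_CA (k₀ : ℝ) (u v z : ℕ → ℂ) (n : ℕ) :
    cT k₀ (-(1/2)) 2 0 1 u v z n = -(cT k₀ (1/4) 1 (-1) 0 u v z (n + 1)) := by
  simp only [cT]
  rw [show ((n + 1 : ℕ) : ℤ) + 1 = (n:ℤ) + 2 by push_cast; ring,
      show ((n + 1 : ℕ) : ℤ) + (-1) = (n:ℤ) + 0 by push_cast; ring,
      show ((n + 1 : ℕ) : ℤ) + 0 = (n:ℤ) + 1 by push_cast; ring,
      show ((n + 1 : ℕ) : ℤ) = (n:ℤ) + 1 by push_cast; ring,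
      kseq_add_one]
  push_cast
  ring

-- identity (iii): D' (n+2) = - B n
lemma id_DB (k₀ : ℝ) (u v z : ℕ → ℂ) (n : ℕ) :
    cT k₀ (1/8) (-1) 0 (-2) u v z (n + 2) = -(cT k₀ (-(1/2)) 1 2 0 u v z n) := by
  simp only [cT]
  rw [show ((n + 2 : ℕ) : ℤ) + (-1) = (n:ℤ) + 1 by push_cast; ring,
      show ((n + 2 : ℕ) : ℤ) + 0 = (n:ℤ) + 2 by push_cast; ring,
      show ((n + 2 : ℕ) : ℤ) + (-2) = (n:ℤ) + 0 by push_cast; ring,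
      show ((n + 2 : ℕ) : ℤ) = ((n:ℤ) + 1) + 1 by push_cast; ring,
      kseq_add_one, kseq_add_one]
  push_cast
  ring

lemma cT_zero_v {k₀ : ℝ} {c : ℂ} {su sv sz : ℤ} {u v z : ℕ → ℂ} {n : ℕ}
    (h : (n:ℤ) + sv ≤ 0) : cT k₀ c su sv sz u v z n = 0 := by
  simp [cT, ext_zero v h]

lemma cT_zero_z {k₀ : ℝ} {c : ℂ} {su sv sz : ℤ} {u v z : ℕ → ℂ} {n : ℕ}
    (h : (n:ℤ) + sz ≤ 0) : cT k₀ c su sv sz u v z n = 0 := by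
  simp [cT, ext_zero z h]

lemma summable_re {f : ℕ → ℂ} (hf : Summable f) : Summable (fun n => (f n).re) :=
  ⟨_, Complex.hasSum_re hf.hasSum⟩

lemma pair1 {f g : ℕ → ℝ} (hf : Summable fun n => f (n + 1))
    (hg : Summable fun n => g (n + 1)) (h1 : f 1 = 0)
    (hrel : ∀ n, g n = -f (n + 1)) :
    (∑' n : ℕ, f (n + 1)) + (∑' n : ℕ, g (n + 1)) = 0 := by
  have e1 : (∑' n : ℕ, f (n + 1)) = f 1 + ∑' n : ℕ, f (n + 2) := Summable.tsum_eq_zero_add hf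
  have e2 : (∑' n : ℕ, g (n + 1)) = ∑' n : ℕ, -f (n + 2) := by
    congr 1
    funext n
    exact hrel (n + 1)
  rw [e1, e2, h1, tsum_neg]
  ring

lemma pair2 {f g : ℕ → ℝ} (hf : Summable fun n => f (n + 1))
    (hg : Summable fun n => g (n + 1)) (h1 : g 1 = 0) (h2 : g 2 = 0)
    (hrel : ∀ n, g (n + 2) = -f n) :
    (∑' n : ℕ, f (n + 1)) + (∑' n : ℕ, g (n + 1)) = 0 := by
  have hg2 : Summable (fun n => g (n + 2)) := (summable_nat_add_iff 1).mpr hg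
  have e1 : (∑' n : ℕ, g (n + 1)) = g 1 + ∑' n : ℕ, g (n + 2) := Summable.tsum_eq_zero_add hg
  have e2 : (∑' n : ℕ, g (n + 2)) = g 2 + ∑' n : ℕ, g (n + 3) := Summable.tsum_eq_zero_add hg2
  have e3 : (∑' n : ℕ, g (n + 3)) = ∑' n : ℕ, -f (n + 1) := by
    congr 1
    funext n
    exact hrel (n + 1)
  rw [e1, e2, e3, h1, h2, tsum_neg]
  ring

lemma pairing_expand (k₀ : ℝ) (u v z : ℕ → ℂ) (n : ℕ) :
    (goyB k₀ u v (n + 1) * conj (z (n + 1))).re =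
      (cT k₀ (1/4) 1 (-1) 0 u v z (n + 1)).re + (cT k₀ (-(1/2)) 1 2 0 u v z (n + 1)).re
      + (cT k₀ (-(1/2)) 2 1 0 u v z (n + 1)).re
      + (cT k₀ (1/8) (-1) (-2) 0 u v z (n + 1)).re := by
  have h := goyB_mul k₀ u v z (n + 1)
  rw [show ((n + 1 : ℕ) : ℤ) + 0 = (n:ℤ) + 1 by push_cast; ring, ext_coe] at h
  rw [h]
  simp [Complex.add_re]

theorem goy_skew (k₀ : ℝ) (hk₀ : 0 < k₀) (u v z : ℕ → ℂ)
    (hu : memH u) (hv : memH v) (hz : memV k₀ z) :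
    pairing (goyB k₀ u v) z = - pairing (goyB k₀ u z) v := by
  -- the eight real-valued families
  set fA : ℕ → ℝ := fun n => (cT k₀ (1/4) 1 (-1) 0 u v z n).re with hfA
  set fB : ℕ → ℝ := fun n => (cT k₀ (-(1/2)) 1 2 0 u v z n).re with hfB
  set fC : ℕ → ℝ := fun n => (cT k₀ (-(1/2)) 2 1 0 u v z n).re with hfC
  set fD : ℕ → ℝ := fun n => (cT k₀ (1/8) (-1) (-2) 0 u v z n).re with hfD
  set gA : ℕ → ℝ := fun n => (cT k₀ (1/4) 1 0 (-1) u v z n).re with hgA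
  set gB : ℕ → ℝ := fun n => (cT k₀ (-(1/2)) 1 0 2 u v z n).re with hgB
  set gC : ℕ → ℝ := fun n => (cT k₀ (-(1/2)) 2 0 1 u v z n).re with hgC
  set gD : ℕ → ℝ := fun n => (cT k₀ (1/8) (-1) 0 (-2) u v z n).re with hgD
  have SA : Summable (fun n : ℕ => fA (n + 1)) :=
    summable_re (summable_cT hk₀ hu hv hz (1/4) 1 (-1) (sz := 0) (by norm_num))
  have SB : Summable (fun n : ℕ => fB (n + 1)) :=
    summable_re (summable_cT hk₀ hu hv hz (-(1/2)) 1 2 (sz := 0) (by norm_num))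
  have SC : Summable (fun n : ℕ => fC (n + 1)) :=
    summable_re (summable_cT hk₀ hu hv hz (-(1/2)) 2 1 (sz := 0) (by norm_num))
  have SD : Summable (fun n : ℕ => fD (n + 1)) :=
    summable_re (summable_cT hk₀ hu hv hz (1/8) (-1) (-2) (sz := 0) (by norm_num))
  have SA' : Summable (fun n : ℕ => gA (n + 1)) :=
    summable_re (summable_cT hk₀ hu hv hz (1/4) 1 0 (sz := -1) (by norm_num))
  have SB' : Summable (fun n : ℕ => gB (n + 1)) :=
    summable_re (summable_cT hk₀ hu hv hz (-(1/2)) 1 0 (sz := 2) (by norm_num))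
  have SC' : Summable (fun n : ℕ => gC (n + 1)) :=
    summable_re (summable_cT hk₀ hu hv hz (-(1/2)) 2 0 (sz := 1) (by norm_num))
  have SD' : Summable (fun n : ℕ => gD (n + 1)) :=
    summable_re (summable_cT hk₀ hu hv hz (1/8) (-1) 0 (sz := -2) (by norm_num))
  -- expand the first pairing
  have P1 : pairing (goyB k₀ u v) z =
      (∑' n : ℕ, fA (n + 1)) + (∑' n : ℕ, fB (n + 1))
      + (∑' n : ℕ, fC (n + 1)) + (∑' n : ℕ, fD (n + 1)) := by
    unfold pairing
    rw [tsum_congr (fun n => pairing_expand k₀ u v z n)]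
    rw [Summable.tsum_add ((SA.add SB).add SC) SD, Summable.tsum_add (SA.add SB) SC, Summable.tsum_add SA SB]
  -- expand the second pairing
  have P2 : pairing (goyB k₀ u z) v =
      (∑' n : ℕ, gA (n + 1)) + (∑' n : ℕ, gB (n + 1))
      + (∑' n : ℕ, gC (n + 1)) + (∑' n : ℕ, gD (n + 1)) := by
    unfold pairing
    have hpt : ∀ n : ℕ, (goyB k₀ u z (n + 1) * conj (v (n + 1))).re =
        gA (n + 1) + gB (n + 1) + gC (n + 1) + gD (n + 1) := by
      intro n
      have h := pairing_expand k₀ u z v n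
      rw [cT_swap k₀ (1/4) 1 (-1) 0 u z v (n + 1),
          cT_swap k₀ (-(1/2)) 1 2 0 u z v (n + 1),
          cT_swap k₀ (-(1/2)) 2 1 0 u z v (n + 1),
          cT_swap k₀ (1/8) (-1) (-2) 0 u z v (n + 1)] at h
      exact h
    rw [tsum_congr hpt]
    rw [Summable.tsum_add ((SA'.add SB').add SC') SD', Summable.tsum_add (SA'.add SB') SC', Summable.tsum_add SA' SB']
  -- the four cancellations
  have c1 : (∑' n : ℕ, fA (n + 1)) + (∑' n : ℕ, gC (n + 1)) = 0 := by
    apply pair1 SA SC'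
    · simp only [hfA]
      rw [cT_zero_v (by norm_num : ((1:ℕ):ℤ) + (-1) ≤ 0)]
      simp
    · intro n
      simp only [hfA, hgC]
      rw [id_CA]
      simp
  have c2 : (∑' n : ℕ, gA (n + 1)) + (∑' n : ℕ, fC (n + 1)) = 0 := by
    apply pair1 SA' SC
    · simp only [hgA]
      rw [cT_zero_z (by norm_num : ((1:ℕ):ℤ) + (-1) ≤ 0)]
      simp
    · intro n
      simp only [hgA, hfC]
      have h := id_CA k₀ u z v n
      rw [cT_swap k₀ (-(1/2)) 2 0 1 u z v n,
          cT_swap k₀ (1/4) 1 (-1) 0 u z v (n + 1)] at h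
      rw [h]
      simp
  have c3 : (∑' n : ℕ, fB (n + 1)) + (∑' n : ℕ, gD (n + 1)) = 0 := by
    apply pair2 SB SD'
    · simp only [hgD]
      rw [cT_zero_z (by norm_num : ((1:ℕ):ℤ) + (-2) ≤ 0)]
      simp
    · simp only [hgD]
      rw [cT_zero_z (by norm_num : ((2:ℕ):ℤ) + (-2) ≤ 0)]
      simp
    · intro n
      simp only [hgD, hfB]
      rw [id_DB]
      simp
  have c4 : (∑' n : ℕ, gB (n + 1)) + (∑' n : ℕ, fD (n + 1)) = 0 := by
    apply pair2 SB' SD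
    · simp only [hfD]
      rw [cT_zero_v (by norm_num : ((1:ℕ):ℤ) + (-2) ≤ 0)]
      simp
    · simp only [hfD]
      rw [cT_zero_v (by norm_num : ((2:ℕ):ℤ) + (-2) ≤ 0)]
      simp
    · intro n
      simp only [hfD, hgB]
      have h := id_DB k₀ u z v n
      rw [cT_swap k₀ (1/8) (-1) 0 (-2) u z v (n + 2),
          cT_swap k₀ (-(1/2)) 1 2 0 u z v n] at h
      rw [h]
      simp
  rw [P1, P2]
  linarith

theorem goy_extended_skew_symmetry (k₀ : ℝ) (hk₀ : 0 < k₀) (u v z : ℕ → ℂ)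
    (hu : memH u) (hv : memH v) (hz : memV k₀ z) :
    pairing (goyB k₀ u v) z = - pairing (goyB k₀ u z) v :=
  goy_skew k₀ hk₀ u v z hu hv hz

end
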